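/- Let B ∈ M_d(ℂ) be hermitian with comparison matrix M(B) = s·I − P where P is an irreducible entrywise nonnegative symmetric matrix and s ≥ ρ(P) (the spectral radius of P). Then there exists a positive diagonal matrix D such that DBD is diagonally dominant; i.e., B is scaled diagonally dominant. -/

import Mathlib

open Matrix Finset
open scoped ComplexOrder

/-- If `B` is hermitian with comparison matrix `M(B) = s·I − P`, where `P` is an
irreducible entrywise nonnegative symmetric matrix and `s ≥ ρ(P)`, then `B` is scaled
diagonally dominant: there is a positive diagonal matrix `D` with `DBD` diagonally dominant. -/
theorem scaled_diagonally_dominant_of_comparison_M_matrix {d : ℕ}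
    (B : Matrix (Fin d) (Fin d) ℂ) (hB : B.IsHermitian)
    (s : ℝ) (P : Matrix (Fin d) (Fin d) ℝ)
    (hP0 : ∀ i j, 0 ≤ P i j) (hPsymm : P.IsSymm)
    (hirr : ∀ S : Finset (Fin d), S.Nonempty → S ≠ univ →
      ∃ i ∈ S, ∃ j ∉ S, P i j ≠ 0)
    (hcomp : (Matrix.of fun i j =>
        if i = j then ‖B i j‖ else -‖B i j‖)
      = s • (1 : Matrix (Fin d) (Fin d) ℝ) - P)
    (hs : ∀ μ ∈ spectrum ℝ P, |μ| ≤ s) :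
    ∃ D : Fin d → ℝ, (∀ i, 0 < D i) ∧
      ∀ i, ∑ j ∈ univ.filter (· ≠ i),
          ‖(D i : ℂ) * B i j * (D j : ℂ)‖
        ≤ ‖(D i : ℂ) * B i i * (D i : ℂ)‖ := by
  rcases Nat.eq_zero_or_pos d with hd | hd
  · subst hd
    exact ⟨fun i => 1, fun i => Fin.elim0 i, fun i => Fin.elim0 i⟩
  -- the quadratic form
  set f : (Fin d → ℝ) → ℝ := fun x => ∑ i, ∑ j, P i j * (x i * x j) with hf
  set K : Set (Fin d → ℝ) := {x | (∀ i, 0 ≤ x i) ∧ ∑ i, x i ^ 2 = 1} with hK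
  have hKne : K.Nonempty := by
    refine ⟨fun j => if j = ⟨0, hd⟩ then 1 else 0, fun i => by positivity, ?_⟩
    rw [Finset.sum_eq_single ⟨0, hd⟩]
    · simp
    · intro b _ hb; simp [hb]
    · simp
  have hKsub : K ⊆ Set.pi Set.univ (fun _ : Fin d => Set.Icc (0:ℝ) 1) := by
    rintro x ⟨hx0, hx1⟩ i _
    refine ⟨hx0 i, ?_⟩
    have h1 : x i ^ 2 ≤ 1 := by
      rw [← hx1]
      exact Finset.single_le_sum (f := fun j => x j ^ 2) (fun j _ => sq_nonneg _)
        (Finset.mem_univ i)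
    nlinarith [hx0 i]
  have hKc : IsCompact K := by
    refine IsCompact.of_isClosed_subset (isCompact_univ_pi fun _ => isCompact_Icc) ?_ hKsub
    have h1 : IsClosed {x : Fin d → ℝ | ∀ i, 0 ≤ x i} := by
      have : {x : Fin d → ℝ | ∀ i, 0 ≤ x i} = ⋂ i, {x | 0 ≤ x i} := by
        ext x; simp [Set.mem_iInter]
      rw [this]
      exact isClosed_iInter fun i => isClosed_le continuous_const (continuous_apply i)
    have h2 : IsClosed {x : Fin d → ℝ | ∑ i, x i ^ 2 = 1} :=
      isClosed_eq (by continuity) continuous_const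
    exact (h1.inter h2 : IsClosed K)
  have hfc : Continuous f := by
    apply continuous_finset_sum
    intro i _
    apply continuous_finset_sum
    intro j _
    exact continuous_const.mul ((continuous_apply i).mul (continuous_apply j))
  obtain ⟨u, huK, humax⟩ := hKc.exists_isMaxOn hKne hfc.continuousOn
  obtain ⟨hu0, hunorm⟩ := huK
  set lam : ℝ := f u with hlam
  -- Claim A : Rayleigh bound
  have claimA : ∀ x : Fin d → ℝ, f x ≤ lam * ∑ i, x i ^ 2 := by
    intro x
    have habs : f x ≤ f (fun i => |x i|) := by
      apply Finset.sum_le_sum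
      intro i _
      apply Finset.sum_le_sum
      intro j _
      have : x i * x j ≤ |x i| * |x j| := by
        calc x i * x j ≤ |x i * x j| := le_abs_self _
        _ = |x i| * |x j| := abs_mul _ _
      exact mul_le_mul_of_nonneg_left this (hP0 i j)
    rcases eq_or_lt_of_le (show (0:ℝ) ≤ ∑ i, x i ^ 2 from
        Finset.sum_nonneg fun i _ => sq_nonneg _) with hc | hc
    · have hx0 : ∀ i, x i = 0 := by
        intro i
        have := Finset.sum_eq_zero_iff_of_nonneg
          (fun j (_ : j ∈ univ) => sq_nonneg (x j)) |>.mp hc.symm i (Finset.mem_univ i)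
        exact pow_eq_zero_iff (n := 2) (by norm_num) |>.mp this
      have : f x = 0 := by
        apply Finset.sum_eq_zero; intro i _; apply Finset.sum_eq_zero; intro j _
        simp [hx0 i]
      rw [this, ← hc, mul_zero]
    · set c := ∑ i, x i ^ 2
      have hcs : Real.sqrt c > 0 := Real.sqrt_pos.mpr hc
      set y : Fin d → ℝ := fun i => |x i| / Real.sqrt c with hy
      have hyK : y ∈ K := by
        constructor
        · intro i; exact div_nonneg (abs_nonneg _) hcs.le
        · have : ∀ i, y i ^ 2 = x i ^ 2 / c := by
            intro i
            rw [hy]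
            rw [div_pow, sq_abs, Real.sq_sqrt hc.le]
          simp_rw [this]
          rw [← Finset.sum_div, div_self hc.ne']
      have hfy : f y ≤ lam := humax hyK
      have hfy2 : f (fun i => |x i|) = c * f y := by
        rw [hf]
        simp only []
        rw [Finset.mul_sum]
        apply Finset.sum_congr rfl
        intro i _
        rw [Finset.mul_sum]
        apply Finset.sum_congr rfl
        intro j _
        rw [hy]
        have hxy : |x i| / Real.sqrt c * (|x j| / Real.sqrt c) = |x i| * |x j| / c := by
          rw [div_mul_div_comm, Real.mul_self_sqrt hc.le]
        rw [hxy]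
        field_simp
      calc f x ≤ f (fun i => |x i|) := habs
        _ = c * f y := hfy2
        _ ≤ c * lam := mul_le_mul_of_nonneg_left hfy hc.le
        _ = lam * c := mul_comm _ _
  -- dot product form
  have hdot : ∀ x : Fin d → ℝ, x ⬝ᵥ P *ᵥ x = f x := by
    intro x
    simp only [dotProduct, mulVec, dotProduct, hf, Finset.mul_sum]
    apply Finset.sum_congr rfl
    intro i _
    apply Finset.sum_congr rfl
    intro j _
    ring
  -- M is PSD
  set M : Matrix (Fin d) (Fin d) ℝ := lam • 1 - P with hM
  have hPherm : P.IsHermitian := by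
    rw [Matrix.IsHermitian, conjTranspose_eq_transpose_of_trivial]
    exact hPsymm
  have hMpsd : M.PosSemidef := by
    refine posSemidef_iff_dotProduct_mulVec.mpr ⟨?_, ?_⟩
    · show Mᴴ = M
      rw [hM, conjTranspose_eq_transpose_of_trivial, transpose_sub, transpose_smul,
        transpose_one, hPsymm.eq]
    · intro x
      have : star x = x := by
        funext i; simp
      rw [this, hM, Matrix.sub_mulVec, dotProduct_sub, Matrix.smul_mulVec,
        Matrix.one_mulVec, dotProduct_smul, hdot]
      have h1 : x ⬝ᵥ x = ∑ i, x i ^ 2 := by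
        simp [dotProduct, sq]
      rw [smul_eq_mul, h1, sub_nonneg]
      exact claimA x
  -- u is an eigenvector
  have hMu : M *ᵥ u = 0 := by
    rw [← hMpsd.dotProduct_mulVec_zero_iff]
    have : star u = u := by funext i; simp
    rw [this, hM, Matrix.sub_mulVec, dotProduct_sub, Matrix.smul_mulVec,
      Matrix.one_mulVec, dotProduct_smul, hdot]
    have h1 : u ⬝ᵥ u = ∑ i, u i ^ 2 := by simp [dotProduct, sq]
    rw [smul_eq_mul, h1, hunorm, mul_one, hlam, sub_self]
  have hPu : P *ᵥ u = lam • u := by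
    have := hMu
    rw [hM, Matrix.sub_mulVec, sub_eq_zero, Matrix.smul_mulVec, Matrix.one_mulVec] at this
    exact this.symm
  have hune : u ≠ 0 := by
    intro h
    rw [h] at hunorm
    simp at hunorm
  -- lam in spectrum
  have hlam_spec : lam ∈ spectrum ℝ P := by
    rw [spectrum.mem_iff]
    intro hunit
    have hMeq : (algebraMap ℝ (Matrix (Fin d) (Fin d) ℝ)) lam - P = M := by
      rw [Algebra.algebraMap_eq_smul_one, hM]
    rw [hMeq] at hunit
    have hinj := Matrix.mulVec_injective_iff_isUnit.mpr hunit
    have : u = 0 := by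
      have := hinj (a₁ := u) (a₂ := 0) (by rw [hMu, Matrix.mulVec_zero])
      exact this
    exact hune this
  have hlam_le : lam ≤ s := le_trans (le_abs_self _) (hs lam hlam_spec)
  -- u is strictly positive
  have hupos : ∀ i, 0 < u i := by
    intro i
    rcases lt_or_eq_of_le (hu0 i) with h | h
    · exact h
    exfalso
    set S : Finset (Fin d) := univ.filter (fun k => u k ≠ 0) with hS
    have hSne : S.Nonempty := by
      by_contra h'
      rw [Finset.not_nonempty_iff_eq_empty] at h'
      apply hune
      funext k
      simp only [Pi.zero_apply]
      by_contra hk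
      have : k ∈ S := by rw [hS]; simp [hk]
      rw [h'] at this
      exact absurd this (Finset.notMem_empty k)
    have hSne' : S ≠ univ := by
      intro h'
      have : i ∈ S := h' ▸ Finset.mem_univ i
      rw [hS, Finset.mem_filter] at this
      exact this.2 h.symm
    obtain ⟨a, haS, b, hbS, hab⟩ := hirr S hSne hSne'
    -- u b = 0
    have hub : u b = 0 := by
      by_contra h'
      exact hbS (by rw [hS]; simp [h'])
    have hPub : (P *ᵥ u) b = 0 := by
      rw [hPu]; simp [hub]
    have : ∀ k, P b k * u k = 0 := by
      have := (Finset.sum_eq_zero_iff_of_nonneg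
        (fun k (_ : k ∈ univ) => mul_nonneg (hP0 b k) (hu0 k))).mp hPub
      intro k; exact this k (Finset.mem_univ k)
    have hua : u a ≠ 0 := by
      rw [hS, Finset.mem_filter] at haS
      exact haS.2
    have hPba : P b a = 0 := by
      rcases mul_eq_zero.mp (this a) with h' | h'
      · exact h'
      · exact absurd h' hua
    apply hab
    have : P a b = P b a := by
      conv_lhs => rw [← hPsymm]
      rfl
    rw [this, hPba]
  -- entry identities from hcomp
  have habsBij : ∀ i j, i ≠ j → ‖B i j‖ = P i j := by
    intro i j hij
    have := congrFun (congrFun hcomp i) j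
    simp only [Matrix.of_apply, if_neg hij, Matrix.sub_apply, Matrix.smul_apply,
      Matrix.one_apply_ne hij, smul_eq_mul, mul_zero, zero_sub] at this
    linarith
  have habsBii : ∀ i, ‖B i i‖ = s - P i i := by
    intro i
    have := congrFun (congrFun hcomp i) i
    simpa using this
  refine ⟨u, hupos, ?_⟩
  intro i
  have key : ∀ j, ‖(u i : ℂ) * B i j * (u j : ℂ)‖
      = u i * ‖B i j‖ * u j := by
    intro j
    rw [norm_mul, norm_mul, Complex.norm_real, Complex.norm_real, Real.norm_eq_abs,
      Real.norm_eq_abs, abs_of_pos (hupos i), abs_of_pos (hupos j)]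
  have step1 : ∑ j ∈ univ.filter (· ≠ i), u i * ‖B i j‖ * u j
      = ∑ j ∈ univ.erase i, u i * P i j * u j := by
    rw [Finset.filter_ne']
    apply Finset.sum_congr rfl
    intro j hj
    rw [habsBij i j (Ne.symm (Finset.mem_erase.mp hj).1)]
  have step2 : ∑ j ∈ univ.erase i, u i * P i j * u j
      = (∑ j, u i * P i j * u j) - u i * P i i * u i :=
    Finset.sum_erase_eq_sub (Finset.mem_univ i)
  have step3 : (∑ j, u i * P i j * u j) = u i * (lam * u i) := by
    have h1 : (∑ j, u i * P i j * u j) = u i * ∑ j, P i j * u j := by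
      rw [Finset.mul_sum]
      exact Finset.sum_congr rfl fun j _ => by ring
    have h2 : ∑ j, P i j * u j = lam * u i := by
      have h3 := congrFun hPu i
      simpa [Matrix.mulVec, dotProduct] using h3
    rw [h1, h2]
  have hrhs : ‖(u i : ℂ) * B i i * (u i : ℂ)‖ = u i * (s - P i i) * u i := by
    rw [key i, habsBii i]
  have hlhs : ∑ j ∈ univ.filter (· ≠ i), ‖(u i : ℂ) * B i j * (u j : ℂ)‖
      = u i * (lam * u i) - u i * P i i * u i := by
    calc ∑ j ∈ univ.filter (· ≠ i), ‖(u i : ℂ) * B i j * (u j : ℂ)‖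
        = ∑ j ∈ univ.filter (· ≠ i), u i * ‖B i j‖ * u j :=
          Finset.sum_congr rfl fun j _ => key j
      _ = ∑ j ∈ univ.erase i, u i * P i j * u j := step1
      _ = (∑ j, u i * P i j * u j) - u i * P i i * u i := step2
      _ = u i * (lam * u i) - u i * P i i * u i := by rw [step3]
  rw [hlhs, hrhs]
  nlinarith [sq_nonneg (u i), mul_le_mul_of_nonneg_right hlam_le (sq_nonneg (u i))]
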